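/- Let p > 3 be a prime, n ≥ 1, and let σ ∈ GL_n(𝔽_p) be an element of order p whose minimal polynomial is (t-1)². Then there is no element τ ∈ GL_n(ℤ/p²ℤ) of order p whose reduction modulo p equals σ. -/

import Mathlib

lemma zmod_sq_lift (p : ℕ) [NeZero p] (a : ZMod (p ^ 2))
    (h : ZMod.castHom (dvd_pow_self p two_ne_zero) (ZMod p) a = 0) :
    ∃ b : ZMod (p ^ 2), a = (p : ZMod (p ^ 2)) * b := by
  haveI : NeZero (p ^ 2) := ⟨pow_ne_zero 2 (NeZero.ne p)⟩
  rw [ZMod.castHom_apply, ← ZMod.natCast_val, ZMod.natCast_eq_zero_iff] at h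
  obtain ⟨k, hk⟩ := h
  refine ⟨(k : ZMod (p ^ 2)), ?_⟩
  have : ((a.val : ℕ) : ZMod (p ^ 2)) = a := ZMod.natCast_zmod_val a
  rw [← this, hk]
  push_cast
  ring

lemma zmod_sq_back (p : ℕ) (hp : 0 < p) (a : ZMod (p ^ 2))
    (h : (p : ZMod (p ^ 2)) * a = 0) :
    ZMod.castHom (dvd_pow_self p two_ne_zero) (ZMod p) a = 0 := by
  haveI : NeZero p := ⟨hp.ne'⟩
  haveI : NeZero (p ^ 2) := ⟨pow_ne_zero 2 (NeZero.ne p)⟩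
  have h1 : ((p * a.val : ℕ) : ZMod (p ^ 2)) = 0 := by
    push_cast
    rw [ZMod.natCast_zmod_val a]
    exact h
  rw [ZMod.natCast_eq_zero_iff] at h1
  obtain ⟨c, hc⟩ := h1
  have hval : a.val = p * c := by
    have hmm : p * a.val = p * (p * c) := by rw [hc]; ring
    exact Nat.eq_of_mul_eq_mul_left hp hmm
  have h2 : p ∣ a.val := ⟨c, hval⟩
  rw [ZMod.castHom_apply, ← ZMod.natCast_val, ZMod.natCast_eq_zero_iff]
  exact h2

open Polynomial in
/-- Let `p > 3` be a prime, `n ≥ 1`, and let `σ ∈ GL_n(𝔽_p)` be an element of order `p`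
whose minimal polynomial is `(t-1)²`.  Then `σ` does not lift to an element of order `p`
in `GL_n(ℤ/p²ℤ)` along entrywise reduction modulo `p`. -/
theorem no_order_p_lift (p n : ℕ) (hp : p.Prime) (hp3 : 3 < p) (hn : 1 ≤ n)
    (σ : (Matrix (Fin n) (Fin n) (ZMod p))ˣ)
    (hord : orderOf σ = p)
    (hmin : minpoly (ZMod p) ((σ : Matrix (Fin n) (Fin n) (ZMod p))) = (X - 1) ^ 2) :
    ¬ ∃ τ : (Matrix (Fin n) (Fin n) (ZMod (p ^ 2)))ˣ,
        orderOf τ = p ∧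
        Units.map (RingHom.mapMatrix
            (ZMod.castHom (dvd_pow_self p two_ne_zero) (ZMod p))).toMonoidHom τ = σ := by
  haveI : Fact p.Prime := ⟨hp⟩
  rintro ⟨τ, hτord, hτred⟩
  set e := ZMod.castHom (dvd_pow_self p two_ne_zero) (ZMod p) with he
  set π := RingHom.mapMatrix (m := Fin n) e with hπ
  -- reduction of τ's matrix is σ's matrix
  have hred : π (τ : Matrix (Fin n) (Fin n) (ZMod (p ^ 2))) = (σ : Matrix (Fin n) (Fin n) (ZMod p)) := by
    rw [← hτred]; rfl
  set M : Matrix (Fin n) (Fin n) (ZMod (p ^ 2)) :=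
    (τ : Matrix (Fin n) (Fin n) (ZMod (p ^ 2))) - 1 with hM
  -- σ - 1 squares to zero
  have h2 : ((σ : Matrix (Fin n) (Fin n) (ZMod p)) - 1) ^ 2 = 0 := by
    have := minpoly.aeval (ZMod p) ((σ : Matrix (Fin n) (Fin n) (ZMod p)))
    rw [hmin] at this
    simpa using this
  -- π (M^2) = 0
  have hM2 : π (M ^ 2) = 0 := by
    have : π M = (σ : Matrix (Fin n) (Fin n) (ZMod p)) - 1 := by
      rw [hM, map_sub, hred, map_one]
    rw [map_pow, this, h2]
  -- so M^2 = p • B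
  have hexists : ∀ i j, ∃ b : ZMod (p ^ 2), (M ^ 2) i j = (p : ZMod (p ^ 2)) * b := by
    intro i j
    apply zmod_sq_lift p
    have : π (M ^ 2) i j = 0 := by rw [hM2]; rfl
    exact this
  choose B hB using hexists
  have hMsq : M ^ 2 = (p : ZMod (p ^ 2)) • (Matrix.of B) := by
    ext i j
    simpa using hB i j
  have hpp : ((p : ZMod (p ^ 2))) ^ 2 = 0 := by
    rw [← Nat.cast_pow, ZMod.natCast_self]
  -- M^4 = 0
  have hM4 : M ^ 4 = 0 := by
    have : M ^ 4 = (M ^ 2) * (M ^ 2) := by rw [← pow_add]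
    rw [this, hMsq, smul_mul_smul_comm, ← sq, hpp, zero_smul]
  -- p • M^2 = 0
  have hpM2 : (p : ZMod (p ^ 2)) • (M ^ 2) = 0 := by
    rw [hMsq, smul_smul, ← sq, hpp, zero_smul]
  -- τ^p = 1 as matrices
  have hτp : τ ^ p = 1 := orderOf_dvd_iff_pow_eq_one.mp (dvd_of_eq hτord)
  have hTpow : ((τ : Matrix (Fin n) (Fin n) (ZMod (p ^ 2)))) ^ p = 1 := by
    rw [← Units.val_pow_eq_pow_val, hτp, Units.val_one]
  have hT : (τ : Matrix (Fin n) (Fin n) (ZMod (p ^ 2))) = M + 1 := by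
    rw [hM]; abel
  have hbin : (M + 1) ^ p =
      ∑ k ∈ Finset.range (p + 1), M ^ k * 1 ^ (p - k) * (p.choose k : Matrix (Fin n) (Fin n) (ZMod (p ^ 2))) :=
    Commute.add_pow (Commute.one_right M) p
  -- terms with k ≥ 2 vanish
  have hterm : ∀ k, 2 ≤ k →
      M ^ k * 1 ^ (p - k) * (p.choose k : Matrix (Fin n) (Fin n) (ZMod (p ^ 2))) = 0 := by
    intro k hk
    rw [one_pow, mul_one]
    by_cases h4 : 4 ≤ k
    · have : M ^ k = M ^ 4 * M ^ (k - 4) := by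
        rw [← pow_add, Nat.add_sub_cancel' h4]
      rw [this, hM4, zero_mul, zero_mul]
    · -- k = 2 or 3, k < p, so p ∣ choose p k
      have hklt : k < p := by omega
      have hdvd : p ∣ p.choose k := hp.dvd_choose_self (by omega) hklt
      obtain ⟨m, hm⟩ := hdvd
      have hMk : M ^ k = M ^ (k - 2) * M ^ 2 := by
        rw [← pow_add]; congr 1; omega
      rw [← (Nat.cast_commute (p.choose k) (M ^ k)).eq, hm, hMk]
      calc ((p * m : ℕ) : Matrix (Fin n) (Fin n) (ZMod (p ^ 2))) * (M ^ (k - 2) * M ^ 2)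
          = (p * m) • (M ^ (k - 2) * M ^ 2) := (nsmul_eq_mul _ _).symm
        _ = m • ((p : ZMod (p ^ 2)) • (M ^ (k - 2) * M ^ 2)) := by
            rw [Nat.cast_smul_eq_nsmul (ZMod (p ^ 2)) p, mul_comm p m, mul_smul]
        _ = m • (M ^ (k - 2) * ((p : ZMod (p ^ 2)) • M ^ 2)) := by rw [mul_smul_comm]
        _ = 0 := by rw [hpM2, mul_zero, smul_zero]
  -- sum over range (p+1) = term 0 + term 1
  have hsum : (M + 1) ^ p = 1 + (p : ZMod (p ^ 2)) • M := by
    rw [hbin]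
    rw [show p + 1 = 2 + (p - 1) by omega]
    rw [Finset.sum_range_add]
    have h0 : ∑ k ∈ Finset.range 2,
        M ^ k * 1 ^ (p - k) * (p.choose k : Matrix (Fin n) (Fin n) (ZMod (p ^ 2)))
        = 1 + (p : ZMod (p ^ 2)) • M := by
      rw [Finset.sum_range_succ, Finset.sum_range_one]
      simp only [pow_zero, pow_one, one_mul, mul_one, one_pow, Nat.choose_zero_right,
        Nat.choose_one_right, Nat.cast_one]
      rw [← (Nat.cast_commute p M).eq, ← nsmul_eq_mul, ← Nat.cast_smul_eq_nsmul (ZMod (p ^ 2))]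
    have h1 : ∑ k ∈ Finset.range (p - 1),
        M ^ (2 + k) * 1 ^ (p - (2 + k)) * (p.choose (2 + k) : Matrix (Fin n) (Fin n) (ZMod (p ^ 2))) = 0 := by
      apply Finset.sum_eq_zero
      intro k _
      exact hterm (2 + k) (by omega)
    rw [h0, h1, add_zero]
  -- conclude p • M = 0
  have hpM : (p : ZMod (p ^ 2)) • M = 0 := by
    have h := hsum
    rw [← hT, hTpow] at h
    exact left_eq_add.mp h
  -- so π M = 0, i.e. σ = 1
  have hred0 : (σ : Matrix (Fin n) (Fin n) (ZMod p)) - 1 = 0 := by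
    have hπM : π M = (σ : Matrix (Fin n) (Fin n) (ZMod p)) - 1 := by
      rw [hM, map_sub, hred, map_one]
    rw [← hπM]
    ext i j
    have hentry : (p : ZMod (p ^ 2)) * M i j = 0 := by
      have := congrFun (congrFun hpM i) j
      simpa using this
    have := zmod_sq_back p hp.pos (M i j) hentry
    exact this
  have hσ1 : σ = 1 := by
    apply Units.ext
    rw [sub_eq_zero] at hred0
    rw [hred0, Units.val_one]
  rw [hσ1, orderOf_one] at hord
  omega
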